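/- Let 1 < p < 2 and q > p. For every constant C > 0 there exist n ∈ ℕ and functions f_1, …, f_n ∈ X_p such that (Σ_{i=1}^n ‖f_i‖_{L^q[0,1]}^p)^{1/p} > C · max_{ε ∈ {-1,1}^n} ‖Σ_{i=1}^n ε_i f_i‖_{X_p}. (That is, the inclusion X_p ⊂ L^q is not (p,1)-absolutely summing when q > p; witnesses are given by f_i = χ_{[(i-1)/k, i/k)}.) -/

import Mathlib

open MeasureTheory
open scoped ENNReal

/-- Lebesgue measure restricted to `[0,1]`. -/
noncomputable def mu01 : Measure ℝ := volume.restrict (Set.Icc 0 1)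

/-- The weight `W_p(t) = (log(e/t))^{1-p}` for `t ∈ (0,1]`, `W_p(0)=0`. -/
noncomputable def Wp (p t : ℝ) : ℝ :=
  if t = 0 then 0 else Real.log (Real.exp 1 / t) ^ (1 - p)

/-- The norm of the Lorentz space `X_p` on `[0,1]`:
`‖f‖_{X_p} = (∫_0^∞ W_p(μ{s ∈ [0,1] : |f s|^p > λ}) dλ)^{1/p}`. -/
noncomputable def XpNorm (p : ℝ) (f : ℝ → ℝ) : ℝ≥0∞ :=
  (∫⁻ lam in Set.Ioi (0 : ℝ),
      ENNReal.ofReal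
        (Wp p (volume {s : ℝ | s ∈ Set.Icc (0 : ℝ) 1 ∧ lam < |f s| ^ p}).toReal)) ^ (1 / p)

/-- Luxemburg norm of the exponential Orlicz space `Exp L^α` on `[0,1]`. -/
noncomputable def expLNorm (α : ℝ) (f : ℝ → ℝ) : ℝ≥0∞ :=
  ⨅ (lam : ℝ) (_ : 0 < lam ∧
      ∫⁻ t, ENNReal.ofReal (Real.exp ((|f t| / lam) ^ α) - 1) ∂mu01 ≤ 1),
    ENNReal.ofReal lam

/-- Weak `ℓ^q` quasinorm of a finite family of reals. -/
noncomputable def weakLq (q : ℝ) {n : ℕ} (a : Fin n → ℝ) : ℝ :=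
  ⨆ t : Set.Ioi (0 : ℝ), t.1 * (Nat.card {k : Fin n // t.1 < |a k|} : ℝ) ^ (1 / q)

/-- Weak `ℓ^q` quasinorm of a sequence with values in `[0,∞]`, cardinalities
taken via the counting measure on `ℕ`. -/
noncomputable def weakLqSeq (q : ℝ) (a : ℕ → ℝ≥0∞) : ℝ≥0∞ :=
  ⨆ t : Set.Ioi (0 : ℝ),
    ENNReal.ofReal t.1 * Measure.count {k : ℕ | ENNReal.ofReal t.1 < a k} ^ (1 / q)

/-- Peetre `K`-functional for the couple `(L^1[0,1], L^∞[0,1])`. -/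
noncomputable def Kfun (τ : ℝ) (f : ℝ → ℝ) : ℝ≥0∞ :=
  ⨅ (g : ℝ → ℝ) (h : ℝ → ℝ) (_ : f = g + h),
    eLpNorm g 1 mu01 + ENNReal.ofReal τ * eLpNorm h ⊤ mu01

/-- The Rademacher functions `r_k(t) = sgn(sin(2^k π t))`. -/
noncomputable def rademacher (k : ℕ) (t : ℝ) : ℝ :=
  Real.sign (Real.sin (2 ^ k * Real.pi * t))

/-- Marcinkiewicz space norm `‖f‖_{M_φ} = sup_{0<t≤1} (φ(t)/t) K(t,f;L^1,L^∞)`. -/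
noncomputable def MNorm (φ : ℝ → ℝ) (f : ℝ → ℝ) : ℝ≥0∞ :=
  ⨆ t : {t : ℝ // 0 < t ∧ t ≤ 1}, ENNReal.ofReal (φ t.1 / t.1) * Kfun t.1 f
lemma lint_key (c : ℝ) (F : ℝ → ℝ≥0∞)
    (hF1 : ∀ l ∈ Set.Ioo (0:ℝ) 1, F l = ENNReal.ofReal c)
    (hF2 : ∀ l : ℝ, 1 ≤ l → F l = 0) :
    ∫⁻ l in Set.Ioi (0:ℝ), F l = ENNReal.ofReal c := by
  have h1 : ∫⁻ l in Set.Ioi (0:ℝ), F l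
      = ∫⁻ l in Set.Ioi (0:ℝ),
          (Set.Ioo (0:ℝ) 1).indicator (fun _ => ENNReal.ofReal c) l := by
    refine setLIntegral_congr_fun measurableSet_Ioi ?_
    intro l hl
    rcases lt_or_ge l 1 with h | h
    · rw [hF1 l (Set.mem_Ioo.mpr ⟨hl, h⟩),
        Set.indicator_of_mem (Set.mem_Ioo.mpr ⟨hl, h⟩)]
    · rw [hF2 l h, Set.indicator_of_notMem (fun hm => absurd (Set.mem_Ioo.mp hm).2 h.not_gt)]
  rw [h1, lintegral_indicator measurableSet_Ioo, setLIntegral_const,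
    Measure.restrict_apply measurableSet_Ioo]
  have h2 : Set.Ioo (0:ℝ) 1 ∩ Set.Ioi 0 = Set.Ioo 0 1 := by
    ext x; exact ⟨fun h => h.1, fun h => ⟨h, h.1⟩⟩
  rw [h2, Real.volume_Ioo]
  simp

lemma XpNorm_of_shape (p : ℝ) (f : ℝ → ℝ) (A : Set ℝ)
    (hset1 : ∀ l ∈ Set.Ioo (0:ℝ) 1,
      {s : ℝ | s ∈ Set.Icc (0:ℝ) 1 ∧ l < |f s| ^ p} = A)
    (hset2 : ∀ l : ℝ, 1 ≤ l →
      {s : ℝ | s ∈ Set.Icc (0:ℝ) 1 ∧ l < |f s| ^ p} = ∅) :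
    XpNorm p f = (ENNReal.ofReal (Wp p (volume A).toReal)) ^ (1/p) := by
  unfold XpNorm
  congr 1
  apply lint_key
  · intro l hl; rw [hset1 l hl]
  · intro l hl; rw [hset2 l hl]; simp [Wp]
/-- Example: for `1 < p < 2` and `q > p`, the inclusion `X_p ⊂ L^q` is not
`(p,1)`-absolutely summing. -/
theorem Xp_subset_Lq_not_p_one_summing (p q : ℝ) (hp : 1 < p) (hp2 : p < 2) (hq : p < q)
    (C : ℝ) (hC : 0 < C) :
    ∃ (n : ℕ) (f : Fin n → ℝ → ℝ), (∀ i, Measurable (f i)) ∧ (∀ i, XpNorm p (f i) ≠ ⊤) ∧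
      ENNReal.ofReal C *
          (⨆ ε : Fin n → ({-1, 1} : Set ℝ), XpNorm p (fun s => ∑ i, (ε i : ℝ) * f i s)) <
        (∑ i, eLpNorm (f i) (ENNReal.ofReal q) mu01 ^ p) ^ (1 / p) := by
  have hp0 : (0:ℝ) < p := by linarith
  have hq0 : (0:ℝ) < q := by linarith
  set α : ℝ := (1 - p/q) * (1/p) with hα
  have hpq1 : p / q < 1 := (div_lt_one hq0).mpr hq
  have hαpos : 0 < α := by
    have h1 : 0 < 1 - p/q := by linarith
    positivity
  obtain ⟨k, hk⟩ := exists_nat_gt (max 1 (C ^ (1/α)))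
  have hk1 : (1:ℝ) < k := lt_of_le_of_lt (le_max_left _ _) hk
  have hkpos : (0:ℝ) < (k:ℝ) := by linarith
  have hkn : 0 < k := by exact_mod_cast hkpos
  have hCk : C < (k:ℝ) ^ α := by
    have h1 : C ^ (1/α) < (k:ℝ) := lt_of_le_of_lt (le_max_right _ _) hk
    have h2 : (C ^ (1/α)) ^ α = C := by
      rw [← Real.rpow_mul hC.le, one_div_mul_cancel hαpos.ne', Real.rpow_one]
    calc C = (C ^ (1/α)) ^ α := h2.symm
      _ < (k:ℝ) ^ α := Real.rpow_lt_rpow (Real.rpow_nonneg hC.le _) h1 hαpos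
  set I : Fin k → Set ℝ := fun i => Set.Ico ((i.1:ℝ)/k) (((i.1:ℝ)+1)/k) with hI
  set f : Fin k → ℝ → ℝ := fun i => (I i).indicator (fun _ => 1) with hf
  have hsub : ∀ i, I i ⊆ Set.Icc (0:ℝ) 1 := by
    intro i x hx
    have hik : ((i.1:ℝ)+1)/k ≤ 1 := by
      rw [div_le_one hkpos]
      have : (i.1:ℕ) + 1 ≤ k := i.2
      exact_mod_cast this
    have h0 : (0:ℝ) ≤ (i.1:ℝ)/k := by positivity
    exact ⟨le_trans h0 hx.1, le_trans hx.2.le hik⟩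
  have hmeas : ∀ i, Measurable (f i) := fun i => measurable_const.indicator measurableSet_Ico
  have habs : ∀ i s, |f i s| ^ p = if s ∈ I i then 1 else 0 := by
    intro i s
    by_cases h : s ∈ I i
    · simp [hf, Set.indicator_of_mem h, Real.one_rpow, h]
    · simp [hf, Set.indicator_of_notMem h, Real.zero_rpow hp0.ne', h]
  -- value of XpNorm of each f i
  have hXf : ∀ i, XpNorm p (f i)
      = (ENNReal.ofReal (Wp p (volume (I i)).toReal)) ^ (1/p) := by
    intro i
    apply XpNorm_of_shape
    · intro l hl
      ext s
      simp only [Set.mem_setOf_eq]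
      constructor
      · rintro ⟨hs1, hs2⟩
        rw [habs] at hs2
        by_cases h : s ∈ I i
        · exact h
        · simp [h] at hs2; linarith [hl.1]
      · intro hs
        refine ⟨hsub i hs, ?_⟩
        rw [habs]; simp [hs]; exact hl.2
    · intro l hl
      ext s
      simp only [Set.mem_setOf_eq, Set.mem_empty_iff_false, iff_false, not_and]
      intro _
      rw [habs]
      split <;> push_neg <;> linarith
  have hXfne : ∀ i, XpNorm p (f i) ≠ ⊤ := by
    intro i
    rw [hXf i]
    exact ENNReal.rpow_ne_top_of_nonneg (one_div_pos.mpr hp0).le ENNReal.ofReal_ne_top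
  -- covering and uniqueness
  have hcover : ∀ s : ℝ, s ∈ Set.Ico (0:ℝ) 1 → ∃ i : Fin k, s ∈ I i := by
    intro s hs
    have h0 : (0:ℝ) ≤ s * k := mul_nonneg hs.1 hkpos.le
    set m : ℕ := ⌊s * k⌋₊ with hm
    have hm1 : (m:ℝ) ≤ s * k := Nat.floor_le h0
    have hm2 : s * k < m + 1 := Nat.lt_floor_add_one _
    have hmk : m < k := by
      have hx : (m:ℝ) < k := by nlinarith [hs.2]
      exact_mod_cast hx
    refine ⟨⟨m, hmk⟩, ?_, ?_⟩
    · rw [div_le_iff₀ hkpos]; exact hm1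
    · rw [lt_div_iff₀ hkpos]; linarith
  have huniq : ∀ s : ℝ, ∀ i j : Fin k, s ∈ I i → s ∈ I j → i = j := by
    intro s i j hi hj
    have h1 : (i.1:ℝ) ≤ s * k := (div_le_iff₀ hkpos).mp hi.1
    have h2 : s * k < (j.1:ℝ) + 1 := by
      have := (lt_div_iff₀ hkpos).mp hj.2; linarith
    have h3 : (j.1:ℝ) ≤ s * k := (div_le_iff₀ hkpos).mp hj.1
    have h4 : s * k < (i.1:ℝ) + 1 := by
      have := (lt_div_iff₀ hkpos).mp hi.2; linarith
    have hij : (i.1:ℝ) < (j.1:ℝ) + 1 := lt_of_le_of_lt h1 h2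
    have hji : (j.1:ℝ) < (i.1:ℝ) + 1 := lt_of_le_of_lt h3 h4
    have hij' : i.1 < j.1 + 1 := by exact_mod_cast hij
    have hji' : j.1 < i.1 + 1 := by exact_mod_cast hji
    exact Fin.ext (le_antisymm (Nat.lt_succ_iff.mp hij') (Nat.lt_succ_iff.mp hji'))
  -- value of the sum
  have habsg : ∀ (ε : Fin k → ({-1, 1} : Set ℝ)), ∀ s ∈ Set.Icc (0:ℝ) 1,
      |∑ i, (ε i : ℝ) * f i s| ^ p = if s ∈ Set.Ico (0:ℝ) 1 then 1 else 0 := by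
    intro ε s hs
    by_cases hmem : s ∈ Set.Ico (0:ℝ) 1
    · obtain ⟨i0, hi0⟩ := hcover s hmem
      have hsum : ∑ i, (ε i : ℝ) * f i s = (ε i0 : ℝ) * f i0 s := by
        refine Finset.sum_eq_single i0 (fun j _ hj => ?_) (by simp)
        have hfz : f j s = 0 := by
          apply Set.indicator_of_notMem
          exact fun hmem' => hj (huniq s j i0 hmem' hi0)
        rw [hfz, mul_zero]
      have hf1 : f i0 s = 1 := Set.indicator_of_mem hi0 _
      have hone : |(ε i0 : ℝ)| = 1 := by
        rcases (ε i0).2 with h | h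
        · rw [h]; norm_num
        · rw [h]; norm_num
      rw [hsum, hf1, mul_one, hone, Real.one_rpow, if_pos hmem]
    · have hs1 : s = 1 := by
        rcases hs with ⟨hs0, hs1'⟩
        by_contra hne
        exact hmem ⟨hs0, lt_of_le_of_ne hs1' hne⟩
      have hfz : ∀ i, f i s = 0 := by
        intro i
        apply Set.indicator_of_notMem
        intro hmem'
        have hik : ((i.1:ℝ)+1)/k ≤ 1 := by
          rw [div_le_one hkpos]
          have : (i.1:ℕ) + 1 ≤ k := i.2
          exact_mod_cast this
        rw [hs1] at hmem'
        exact absurd hmem'.2 (not_lt.mpr hik)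
      rw [if_neg hmem]
      simp only [hfz, mul_zero, Finset.sum_const_zero, abs_zero]
      exact Real.zero_rpow hp0.ne'
  have hXg : ∀ (ε : Fin k → ({-1, 1} : Set ℝ)),
      XpNorm p (fun s => ∑ i, (ε i : ℝ) * f i s) = 1 := by
    intro ε
    have heq : XpNorm p (fun s => ∑ i, (ε i : ℝ) * f i s)
        = (ENNReal.ofReal (Wp p (volume (Set.Ico (0:ℝ) 1)).toReal)) ^ (1/p) := by
      apply XpNorm_of_shape
      · intro l hl
        ext s
        simp only [Set.mem_setOf_eq]
        constructor
        · rintro ⟨hs1, hs2⟩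
          rw [habsg ε s hs1] at hs2
          by_cases h : s ∈ Set.Ico (0:ℝ) 1
          · exact h
          · simp [h] at hs2; linarith [hl.1]
        · intro hs
          have hs' : s ∈ Set.Icc (0:ℝ) 1 := ⟨hs.1, hs.2.le⟩
          refine ⟨hs', ?_⟩
          rw [habsg ε s hs']; simp [hs]; exact hl.2
      · intro l hl
        ext s
        simp only [Set.mem_setOf_eq, Set.mem_empty_iff_false, iff_false, not_and]
        intro hs1
        rw [habsg ε s hs1]
        split <;> push_neg <;> linarith
    rw [heq, Real.volume_Ico]
    norm_num [Wp, Real.log_exp]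
  haveI : Nonempty ↥({-1, 1} : Set ℝ) := ⟨⟨1, by norm_num⟩⟩
  have hS : (⨆ ε : Fin k → ({-1, 1} : Set ℝ),
      XpNorm p (fun s => ∑ i, (ε i : ℝ) * f i s)) = 1 := by
    simp only [hXg]
    exact iSup_const
  -- the Lq norms
  have hq0' : ENNReal.ofReal q ≠ 0 := (ENNReal.ofReal_pos.mpr hq0).ne'
  have hLp : ∀ i, eLpNorm (f i) (ENNReal.ofReal q) mu01
      = ENNReal.ofReal (1/(k:ℝ)) ^ (1/q) := by
    intro i
    rw [hf]
    simp only
    rw [eLpNorm_indicator_const measurableSet_Ico hq0' ENNReal.ofReal_ne_top]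
    have hμ : mu01 (I i) = ENNReal.ofReal (1/(k:ℝ)) := by
      rw [mu01, Measure.restrict_apply measurableSet_Ico,
        Set.inter_eq_self_of_subset_left (hsub i), hI]
      simp only
      rw [Real.volume_Ico, div_sub_div_same]
      norm_num
    rw [hμ, ENNReal.toReal_ofReal hq0.le]
    simp
  -- compute the RHS
  have hkE0 : ((k:ℕ) : ℝ≥0∞) ≠ 0 := by exact_mod_cast hkn.ne'
  have hkET : ((k:ℕ) : ℝ≥0∞) ≠ ⊤ := ENNReal.natCast_ne_top k
  have hRHS : (∑ i : Fin k, eLpNorm (f i) (ENNReal.ofReal q) mu01 ^ p) ^ (1/p)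
      = ENNReal.ofReal ((k:ℝ) ^ α) := by
    simp only [hLp]
    rw [Finset.sum_const, Finset.card_univ, Fintype.card_fin, nsmul_eq_mul]
    have h1 : (ENNReal.ofReal (1/(k:ℝ)) ^ (1/q)) ^ p
        = ENNReal.ofReal (1/(k:ℝ)) ^ (p/q) := by
      rw [← ENNReal.rpow_mul]
      congr 1
      ring
    rw [h1]
    have h2 : ENNReal.ofReal (1/(k:ℝ)) = ((k:ℕ) : ℝ≥0∞)⁻¹ := by
      rw [one_div, ENNReal.ofReal_inv_of_pos hkpos, ENNReal.ofReal_natCast]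
    rw [h2, ENNReal.inv_rpow, ← ENNReal.rpow_neg]
    have h3 : ((k:ℕ) : ℝ≥0∞) * ((k:ℕ) : ℝ≥0∞) ^ (-(p/q))
        = ((k:ℕ) : ℝ≥0∞) ^ (1 - p/q) := by
      nth_rewrite 1 [← ENNReal.rpow_one ((k:ℕ) : ℝ≥0∞)]
      rw [← ENNReal.rpow_add _ _ hkE0 hkET]
      congr 1 <;> ring
    rw [h3, ← ENNReal.rpow_mul, ← hα, ← ENNReal.ofReal_natCast,
      ENNReal.ofReal_rpow_of_pos hkpos]
  refine ⟨k, f, hmeas, hXfne, ?_⟩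
  rw [hS, mul_one, hRHS]
  exact (ENNReal.ofReal_lt_ofReal_iff (Real.rpow_pos_of_pos hkpos α)).mpr hCk
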